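/- Let G be a connected k-chordal graph of maximum degree Δ, let v₀ ∈ V(G) and L_j the distance layers from v₀. Suppose u, v ∈ L_i are adjacent, x ∈ N(u) ∩ L_{i−1} and y ∈ N(v) ∩ L_{i−1}. Then d_{G[L_{≤ i−1}]}(x, y) ≤ 2Δk. -/

import Mathlib

/-- A graph is `k`-chordal if it has no induced cycle of length at least `k+1`. -/
def IsKChordal {V : Type*} (G : SimpleGraph V) (k : ℕ) : Prop :=
  ∀ (a : V) (c : G.Walk a a), c.IsCycle →
    (∀ u ∈ c.support, ∀ v ∈ c.support, G.Adj u v → s(u, v) ∈ c.edges) →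
    c.length ≤ k

namespace StmtSevenAux

open SimpleGraph

lemma chain_walk {V : Type*} (G : SimpleGraph V) (g : ℕ → V) :
    ∀ n, (∀ j, j < n → G.Adj (g j) (g (j+1))) →
    ∃ w : G.Walk (g 0) (g n), w.length = n ∧
      w.support = (List.range (n+1)).map g ∧
      w.edges = (List.range n).map (fun j => s(g j, g (j+1))) := by
  intro n
  induction n with
  | zero =>
    intro _
    exact ⟨Walk.nil, by simp, by rw [List.range_succ]; simp, by simp⟩
  | succ n ih =>
    intro h
    obtain ⟨w, hl, hs, he⟩ := ih (fun j hj => h j (by omega))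
    refine ⟨w.concat (h n (by omega)), ?_, ?_, ?_⟩
    · simp [Walk.length_concat, hl]
    · rw [Walk.support_concat, hs, List.range_succ]
      simp [List.range_succ]
    · rw [Walk.edges_concat, he, List.concat_eq_append, List.range_succ]
      simp [List.range_succ]
lemma path_getVert_inj {V : Type*} {G : SimpleGraph V} {a b : V} (p : G.Walk a b)
    (hp : p.IsPath) :
    ∀ j l, j ≤ p.length → l ≤ p.length → p.getVert j = p.getVert l → j = l := by
  induction p with
  | nil => intro j l hj hl _; simp only [Walk.length_nil, Nat.le_zero] at hj hl; omega
  | cons h q ih =>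
    rw [Walk.cons_isPath_iff] at hp
    intro j l hj hl heq
    match j, l with
    | 0, 0 => rfl
    | 0, l+1 =>
      exfalso
      apply hp.2
      rw [Walk.mem_support_iff_exists_getVert]
      refine ⟨l, ?_, by simpa using hl⟩
      rw [Walk.getVert_zero] at heq
      rw [Walk.getVert_cons_succ] at heq
      exact heq.symm
    | j+1, 0 =>
      exfalso
      apply hp.2
      rw [Walk.mem_support_iff_exists_getVert]
      refine ⟨j, ?_, by simpa using hj⟩
      rw [Walk.getVert_zero] at heq
      rw [Walk.getVert_cons_succ] at heq
      exact heq
    | j+1, l+1 =>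
      have := ih hp.1 j l (by simpa using hj) (by simpa using hl)
        (by rwa [Walk.getVert_cons_succ, Walk.getVert_cons_succ] at heq)
      omega
lemma exists_big_gap (M : Finset ℕ) (k D : ℕ) (h0 : 0 ∈ M) (hD : D ∈ M)
    (hbig : (M.card - 1) * k < D) :
    ∃ a ∈ M, ∃ b ∈ M, a < b ∧ k < b - a ∧ ∀ c ∈ M, ¬(a < c ∧ c < b) := by
  by_contra hcon
  push_neg at hcon
  have claim : ∀ m, ∀ a ∈ M, D - a = m → D - a ≤ (M.filter (fun c => a < c)).card * k := by
    intro m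
    induction m using Nat.strong_induction_on with
    | _ m ih =>
      intro a ha hm
      by_cases h' : D ≤ a
      · omega
      · push_neg at h'
        set T := M.filter (fun c => a < c) with hT
        have hDT : D ∈ T := by simp [hT, Finset.mem_filter, hD, h']
        have hTne : T.Nonempty := ⟨D, hDT⟩
        set b := T.min' hTne with hb
        have hbT : b ∈ T := T.min'_mem hTne
        have hbM : b ∈ M := (Finset.mem_filter.mp hbT).1
        have hab : a < b := (Finset.mem_filter.mp hbT).2
        have hbD : b ≤ D := T.min'_le D hDT
        have hnob : ∀ c ∈ M, ¬(a < c ∧ c < b) := by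
          rintro c hc ⟨h1, h2⟩
          have : c ∈ T := by simp [hT, Finset.mem_filter, hc, h1]
          exact absurd (T.min'_le c this) (by omega)
        have hgap : b - a ≤ k := by
          by_contra hgap
          push_neg at hgap
          obtain ⟨c, hc, h1, h2⟩ := hcon a ha b hbM hab hgap
          exact hnob c hc ⟨h1, h2⟩
        have hTeq : T = insert b (M.filter (fun c => b < c)) := by
          ext c
          simp only [hT, Finset.mem_insert, Finset.mem_filter]
          constructor
          · rintro ⟨hc, h1⟩
            rcases eq_or_lt_of_le (T.min'_le c (by simp [hT, Finset.mem_filter, hc, h1]))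
              with h | h
            · exact Or.inl h.symm
            · exact Or.inr ⟨hc, h⟩
          · rintro (rfl | ⟨hc, h1⟩)
            · exact ⟨hbM, hab⟩
            · exact ⟨hc, by omega⟩
        have hbnot : b ∉ M.filter (fun c => b < c) := by simp
        have hcard : T.card = (M.filter (fun c => b < c)).card + 1 := by
          rw [hTeq, Finset.card_insert_of_notMem hbnot]
        have ihb := ih (D - b) (by omega) b hbM rfl
        calc D - a = (b - a) + (D - b) := by omega
        _ ≤ k + (M.filter (fun c => b < c)).card * k := by omega
        _ = T.card * k := by rw [hcard]; ring
  have h1 := claim (D - 0) 0 h0 rfl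
  have h2 : (M.filter (fun c => 0 < c)).card ≤ M.card - 1 := by
    have hsub : M.filter (fun c => 0 < c) ⊆ M.erase 0 := by
      intro c hc
      simp only [Finset.mem_filter] at hc
      exact Finset.mem_erase.mpr ⟨by omega, hc.1⟩
    calc (M.filter (fun c => 0 < c)).card ≤ (M.erase 0).card := Finset.card_le_card hsub
    _ = M.card - 1 := Finset.card_erase_of_mem h0
  have := Nat.mul_le_mul_right k h2
  omega
lemma apex1 {V : Type*} {G : SimpleGraph V} {k : ℕ} (hch : IsKChordal G k)
    (z : V) (n : ℕ) (g : ℕ → V)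
    (hadj : ∀ j, j < n → G.Adj (g j) (g (j+1)))
    (hinj : ∀ j l, j ≤ n → l ≤ n → g j = g l → j = l)
    (hz : ∀ j, j ≤ n → g j ≠ z)
    (h0 : G.Adj z (g 0)) (hn : G.Adj z (g n))
    (hind : ∀ j l, j ≤ n → l ≤ n → G.Adj (g j) (g l) → l = j + 1 ∨ j = l + 1)
    (hzg : ∀ j, j ≤ n → G.Adj z (g j) → j = 0 ∨ j = n)
    (hk : k < n) : False := by
  obtain ⟨w, hlen, hsup, hedg⟩ := chain_walk G g n hadj
  have hgn : g 0 ≠ g n := fun h => by have := hinj 0 n (by omega) (by omega) h; omega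
  set q : G.Walk (g 0) z := w.concat hn.symm with hq
  have hqsup : q.support = (List.range (n+1)).map g ++ [z] := by
    rw [hq, Walk.support_concat, hsup]
  have hqedg : q.edges = (List.range n).map (fun j => s(g j, g (j+1))) ++ [s(g n, z)] := by
    rw [hq, Walk.edges_concat, hedg, List.concat_eq_append]
  have hmapnd : ((List.range (n+1)).map g).Nodup := by
    refine List.Nodup.map_on ?_ List.nodup_range
    intro j hj l hl hjl
    exact hinj j l (by have := List.mem_range.mp hj; omega)
      (by have := List.mem_range.mp hl; omega) hjl
  have hznotin : z ∉ (List.range (n+1)).map g := by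
    intro hmem
    obtain ⟨j, hj, hgj⟩ := List.mem_map.mp hmem
    exact hz j (by have := List.mem_range.mp hj; omega) hgj
  have hqpath : q.IsPath := by
    rw [Walk.isPath_def, hqsup]
    rw [List.nodup_append]
    exact ⟨hmapnd, List.nodup_singleton z, by
      rintro a ha b hb rfl; simp only [List.mem_singleton] at hb; subst hb; exact hznotin ha⟩
  have hnotedge : s(z, g 0) ∉ q.edges := by
    rw [hqedg]
    intro hmem
    rcases List.mem_append.mp hmem with hmem | hmem
    · obtain ⟨j, hj, hgj⟩ := List.mem_map.mp hmem
      have hj' := List.mem_range.mp hj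
      rcases Sym2.eq_iff.mp hgj with ⟨h1, h2⟩ | ⟨h1, h2⟩
      · exact hz j (by omega) h1
      · exact hz (j+1) (by omega) h2
    · simp only [List.mem_singleton] at hmem
      rcases Sym2.eq_iff.mp hmem with ⟨h1, h2⟩ | ⟨h1, h2⟩
      · exact hz n (le_refl n) h1.symm
      · exact hgn h2
  set c : G.Walk z z := Walk.cons h0 q with hc
  have hcyc : c.IsCycle := (Walk.cons_isCycle_iff q h0).mpr ⟨hqpath, hnotedge⟩
  have hcsup : c.support = z :: ((List.range (n+1)).map g ++ [z]) := by
    rw [hc, Walk.support_cons, hqsup]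
  have hcedg : c.edges = s(z, g 0) :: ((List.range n).map (fun j => s(g j, g (j+1)))
      ++ [s(g n, z)]) := by
    rw [hc, Walk.edges_cons, hqedg]
  have hmem_char : ∀ s ∈ c.support, s = z ∨ ∃ j ≤ n, s = g j := by
    intro s hs
    rw [hcsup] at hs
    simp only [List.mem_cons, List.mem_append, List.mem_map, List.mem_range,
      List.not_mem_nil, or_false] at hs
    rcases hs with rfl | ⟨j, hj, rfl⟩ | rfl
    · exact Or.inl rfl
    · exact Or.inr ⟨j, by omega, rfl⟩
    · exact Or.inl rfl
  have hedge_seg : ∀ j, j < n → s(g j, g (j+1)) ∈ c.edges := by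
    intro j hj
    rw [hcedg]
    exact List.mem_cons_of_mem _ (List.mem_append_left _
      (List.mem_map.mpr ⟨j, List.mem_range.mpr hj, rfl⟩))
  have hchord : ∀ s ∈ c.support, ∀ t ∈ c.support, G.Adj s t → s(s, t) ∈ c.edges := by
    intro s hs t ht hst
    rcases hmem_char s hs with rfl | ⟨j, hj, rfl⟩ <;>
      rcases hmem_char t ht with rfl | ⟨l, hl, rfl⟩
    · exact absurd rfl hst.ne
    · rcases hzg l hl hst with rfl | rfl
      · rw [hcedg]; exact List.mem_cons_self
      · rw [Sym2.eq_swap, hcedg]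
        exact List.mem_cons_of_mem _ (List.mem_append_right _ (List.mem_singleton.mpr rfl))
    · rcases hzg j hj hst.symm with rfl | rfl
      · rw [Sym2.eq_swap, hcedg]; exact List.mem_cons_self
      · rw [hcedg]
        exact List.mem_cons_of_mem _ (List.mem_append_right _ (List.mem_singleton.mpr rfl))
    · rcases hind j l hj hl hst with rfl | rfl
      · exact hedge_seg j (by omega)
      · rw [Sym2.eq_swap]; exact hedge_seg l (by omega)
  have hle := hch z c hcyc hchord
  have : c.length = n + 2 := by
    rw [hc, Walk.length_cons, hq, Walk.length_concat, hlen]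
  omega
lemma apex2 {V : Type*} {G : SimpleGraph V} {k : ℕ} (hch : IsKChordal G k)
    (z₁ z₂ : V) (hz12 : G.Adj z₁ z₂) (n : ℕ) (g : ℕ → V)
    (hadj : ∀ j, j < n → G.Adj (g j) (g (j+1)))
    (hinj : ∀ j l, j ≤ n → l ≤ n → g j = g l → j = l)
    (hz1 : ∀ j, j ≤ n → g j ≠ z₁) (hz2 : ∀ j, j ≤ n → g j ≠ z₂)
    (h0 : G.Adj z₁ (g 0)) (hn : G.Adj z₂ (g n))
    (hn1 : ¬ G.Adj z₁ (g n)) (h02 : ¬ G.Adj z₂ (g 0))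
    (hind : ∀ j l, j ≤ n → l ≤ n → G.Adj (g j) (g l) → l = j + 1 ∨ j = l + 1)
    (hzg : ∀ j, j ≤ n → G.Adj z₁ (g j) ∨ G.Adj z₂ (g j) → j = 0 ∨ j = n)
    (hk : k < n) : False := by
  obtain ⟨w, hlen, hsup, hedg⟩ := chain_walk G g n hadj
  set q : G.Walk (g 0) z₁ := (w.concat hn.symm).concat hz12.symm with hq
  have hqsup : q.support = (List.range (n+1)).map g ++ [z₂] ++ [z₁] := by
    rw [hq, Walk.support_concat, Walk.support_concat, hsup]
  have hqedg : q.edges = ((List.range n).map (fun j => s(g j, g (j+1))) ++ [s(g n, z₂)])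
      ++ [s(z₂, z₁)] := by
    rw [hq, Walk.edges_concat, Walk.edges_concat, hedg, List.concat_eq_append,
      List.concat_eq_append]
  have hmapnd : ((List.range (n+1)).map g).Nodup := by
    refine List.Nodup.map_on ?_ List.nodup_range
    intro j hj l hl hjl
    exact hinj j l (by have := List.mem_range.mp hj; omega)
      (by have := List.mem_range.mp hl; omega) hjl
  have hz1notin : z₁ ∉ (List.range (n+1)).map g := by
    intro hmem
    obtain ⟨j, hj, hgj⟩ := List.mem_map.mp hmem
    exact hz1 j (by have := List.mem_range.mp hj; omega) hgj
  have hz2notin : z₂ ∉ (List.range (n+1)).map g := by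
    intro hmem
    obtain ⟨j, hj, hgj⟩ := List.mem_map.mp hmem
    exact hz2 j (by have := List.mem_range.mp hj; omega) hgj
  have hqpath : q.IsPath := by
    rw [Walk.isPath_def, hqsup]
    rw [List.nodup_append, List.nodup_append]
    refine ⟨⟨hmapnd, List.nodup_singleton z₂, ?_⟩, List.nodup_singleton z₁, ?_⟩
    · rintro a ha b hb rfl; simp only [List.mem_singleton] at hb; subst hb; exact hz2notin ha
    · rintro a ha b hb rfl
      simp only [List.mem_singleton] at hb; subst hb
      rcases List.mem_append.mp ha with ha | ha
      · exact hz1notin ha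
      · simp only [List.mem_singleton] at ha
        exact hz12.ne ha
  have hnotedge : s(z₁, g 0) ∉ q.edges := by
    rw [hqedg]
    intro hmem
    rcases List.mem_append.mp hmem with hmem | hmem
    · rcases List.mem_append.mp hmem with hmem | hmem
      · obtain ⟨j, hj, hgj⟩ := List.mem_map.mp hmem
        have hj' := List.mem_range.mp hj
        rcases Sym2.eq_iff.mp hgj with ⟨h1, h2⟩ | ⟨h1, h2⟩
        · exact hz1 j (by omega) h1
        · exact hz1 (j+1) (by omega) h2
      · simp only [List.mem_singleton] at hmem
        rcases Sym2.eq_iff.mp hmem with ⟨h1, h2⟩ | ⟨h1, h2⟩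
        · exact hz1 n (le_refl n) h1.symm
        · exact hz12.ne h1
    · simp only [List.mem_singleton] at hmem
      rcases Sym2.eq_iff.mp hmem with ⟨h1, h2⟩ | ⟨h1, h2⟩
      · exact hz12.ne h1
      · exact hz2 0 (by omega) h2
  set c : G.Walk z₁ z₁ := Walk.cons h0 q with hc
  have hcyc : c.IsCycle := (Walk.cons_isCycle_iff q h0).mpr ⟨hqpath, hnotedge⟩
  have hcsup : c.support = z₁ :: ((List.range (n+1)).map g ++ [z₂] ++ [z₁]) := by
    rw [hc, Walk.support_cons, hqsup]
  have hcedg : c.edges = s(z₁, g 0) :: (((List.range n).map (fun j => s(g j, g (j+1)))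
      ++ [s(g n, z₂)]) ++ [s(z₂, z₁)]) := by
    rw [hc, Walk.edges_cons, hqedg]
  have hmem_char : ∀ s ∈ c.support, s = z₁ ∨ s = z₂ ∨ ∃ j ≤ n, s = g j := by
    intro s hs
    rw [hcsup] at hs
    simp only [List.mem_cons, List.mem_append, List.mem_map, List.mem_range,
      List.not_mem_nil, or_false] at hs
    rcases hs with rfl | (⟨j, hj, rfl⟩ | rfl) | rfl
    · exact Or.inl rfl
    · exact Or.inr (Or.inr ⟨j, by omega, rfl⟩)
    · exact Or.inr (Or.inl rfl)
    · exact Or.inl rfl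
  have hedge_seg : ∀ j, j < n → s(g j, g (j+1)) ∈ c.edges := by
    intro j hj
    rw [hcedg]
    exact List.mem_cons_of_mem _ (List.mem_append_left _ (List.mem_append_left _
      (List.mem_map.mpr ⟨j, List.mem_range.mpr hj, rfl⟩)))
  have hmem_e1 : s(z₁, g 0) ∈ c.edges := by rw [hcedg]; exact List.mem_cons_self
  have hmem_e2 : s(g n, z₂) ∈ c.edges := by
    rw [hcedg]
    exact List.mem_cons_of_mem _ (List.mem_append_left _
      (List.mem_append_right _ (List.mem_singleton.mpr rfl)))
  have hmem_e3 : s(z₂, z₁) ∈ c.edges := by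
    rw [hcedg]
    exact List.mem_cons_of_mem _ (List.mem_append_right _ (List.mem_singleton.mpr rfl))
  have hchord : ∀ s ∈ c.support, ∀ t ∈ c.support, G.Adj s t → s(s, t) ∈ c.edges := by
    intro s hs t ht hst
    rcases hmem_char s hs with rfl | rfl | ⟨j, hj, rfl⟩ <;>
      rcases hmem_char t ht with rfl | rfl | ⟨l, hl, rfl⟩
    · exact absurd rfl hst.ne
    · rw [Sym2.eq_swap]; exact hmem_e3
    · -- z₁ -- g l
      rcases hzg l hl (Or.inl hst) with rfl | rfl
      · exact hmem_e1
      · exact absurd hst hn1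
    · exact hmem_e3
    · exact absurd rfl hst.ne
    · -- z₂ -- g l
      rcases hzg l hl (Or.inr hst) with rfl | rfl
      · exact absurd hst h02
      · rw [Sym2.eq_swap]; exact hmem_e2
    · -- g j -- z₁
      rcases hzg j hj (Or.inl hst.symm) with rfl | rfl
      · rw [Sym2.eq_swap]; exact hmem_e1
      · exact absurd hst.symm hn1
    · -- g j -- z₂
      rcases hzg j hj (Or.inr hst.symm) with rfl | rfl
      · exact absurd hst.symm h02
      · exact hmem_e2
    · rcases hind j l hj hl hst with rfl | rfl
      · exact hedge_seg j (by omega)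
      · rw [Sym2.eq_swap]; exact hedge_seg l (by omega)
  have hle := hch z₁ c hcyc hchord
  have : c.length = n + 3 := by
    rw [hc, Walk.length_cons, hq, Walk.length_concat, Walk.length_concat, hlen]
  omega
lemma lift_reachable {V : Type*} {G : SimpleGraph V} {S : Set V} :
    ∀ {c d : V} (w : G.Walk c d), (∀ z ∈ w.support, z ∈ S) →
    ∀ (hc : c ∈ S) (hd : d ∈ S), (G.induce S).Reachable ⟨c, hc⟩ ⟨d, hd⟩ := by
  intro c d w
  induction w with
  | nil => intro _ hc hd; exact Reachable.refl _
  | @cons a b e h p ih =>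
    intro hw hc hd
    have hb : b ∈ S := hw b (by simp [Walk.support_cons])
    have hadj : (G.induce S).Adj ⟨a, hc⟩ ⟨b, hb⟩ := h
    exact hadj.reachable.trans
      (ih (fun z hz => hw z (by simp [Walk.support_cons, hz])) hb hd)

end StmtSevenAux

open StmtSevenAux SimpleGraph in
/-- In a connected `k`-chordal graph of maximum degree `Δ`, if `u, v ∈ L_i` are adjacent,
`x ∈ N(u) ∩ L_{i-1}` and `y ∈ N(v) ∩ L_{i-1}`, then `d_{G[L_{≤ i-1}]}(x, y) ≤ 2Δk`. -/
theorem stmt7 {V : Type*} [Fintype V] (G : SimpleGraph V) (hG : G.Connected)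
    (k Δ : ℕ) (hch : IsKChordal G k) (hΔ : ∀ z : V, (G.neighborSet z).ncard ≤ Δ)
    (v₀ : V) (i : ℕ) (hi : 1 ≤ i)
    (u v x y : V) (hu : G.dist v₀ u = i) (hv : G.dist v₀ v = i) (huv : G.Adj u v)
    (hux : G.Adj u x) (hvy : G.Adj v y)
    (hx : G.dist v₀ x = i - 1) (hy : G.dist v₀ y = i - 1) :
    (G.induce {z | G.dist v₀ z ≤ i - 1}).dist ⟨x, le_of_eq hx⟩ ⟨y, le_of_eq hy⟩
      ≤ 2 * Δ * k := by
  classical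
  set S : Set V := {z | G.dist v₀ z ≤ i - 1} with hS
  -- membership of v₀
  have hv₀S : v₀ ∈ S := by simp [hS, Set.mem_setOf_eq, SimpleGraph.dist_self]
  -- reachability towards v₀ within the induced graph
  have reach : ∀ (z : V) (hz : z ∈ S),
      (G.induce S).Reachable ⟨z, hz⟩ ⟨v₀, hv₀S⟩ := by
    intro z hz
    obtain ⟨w, hwp, hwlen⟩ := hG.exists_path_of_dist v₀ z
    have hsupS : ∀ z' ∈ w.support, z' ∈ S := by
      intro z' hz'
      obtain ⟨q, r, hqr⟩ := Walk.mem_support_iff_exists_append.mp hz'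
      have h1 : G.dist v₀ z' ≤ q.length := SimpleGraph.dist_le q
      have h2 : q.length ≤ w.length := by
        rw [hqr, Walk.length_append]; omega
      have : G.dist v₀ z' ≤ i - 1 := by
        rw [hwlen] at h2
        have := hz
        simp only [hS, Set.mem_setOf_eq] at this ⊢
        omega
      exact this
    exact (lift_reachable w hsupS hv₀S hz).symm
  have hxS : x ∈ S := le_of_eq hx
  have hyS : y ∈ S := le_of_eq hy
  have hreach : (G.induce S).Reachable ⟨x, hxS⟩ ⟨y, hyS⟩ :=
    (reach x hxS).trans (reach y hyS).symm
  obtain ⟨p, hp, hlen⟩ := hreach.exists_path_of_dist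
  by_contra hcon
  push_neg at hcon
  set D := p.length with hD
  have hDdist : (G.induce S).dist ⟨x, hxS⟩ ⟨y, hyS⟩ = D := hlen.symm
  have hDbig : 2 * Δ * k < D := by rw [← hDdist]; exact hcon
  -- u, v are not in S
  have huS : u ∉ S := by
    simp only [hS, Set.mem_setOf_eq, hu]; omega
  have hvS : v ∉ S := by
    simp only [hS, Set.mem_setOf_eq, hv]; omega
  -- key distance lower bound along the shortest path
  have key : ∀ j l, j ≤ p.length → l ≤ p.length → j ≤ l →
      l - j ≤ (G.induce S).dist (p.getVert j) (p.getVert l) := by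
    intro j l hj hl hjl
    obtain ⟨w1, hw1len, -, -⟩ := chain_walk (G.induce S) p.getVert j
      (fun t ht => p.adj_getVert_succ (by omega))
    obtain ⟨w2', hw2'len, -, -⟩ := chain_walk (G.induce S) (fun t => p.getVert (j + t)) (l - j)
      (fun t ht => p.adj_getVert_succ (by omega))
    obtain ⟨w3', hw3'len, -, -⟩ := chain_walk (G.induce S) (fun t => p.getVert (l + t))
      (p.length - l) (fun t ht => p.adj_getVert_succ (by omega))
    have e2 : p.getVert (j + (l - j)) = p.getVert l := by congr 1; omega
    have e3 : p.getVert (l + (p.length - l)) = ⟨y, hyS⟩ := by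
      rw [show l + (p.length - l) = p.length by omega, Walk.getVert_length]
    have hreach2 : (G.induce S).Reachable (p.getVert j) (p.getVert l) :=
      ⟨(w2'.copy rfl e2)⟩
    obtain ⟨w2, hw2p, hw2len⟩ := hreach2.exists_path_of_dist
    have hbig : (G.induce S).dist ⟨x, hxS⟩ ⟨y, hyS⟩ ≤
        ((w1.copy (p.getVert_zero) rfl).append (w2.append (w3'.copy rfl e3))).length :=
      SimpleGraph.dist_le _
    rw [Walk.length_append, Walk.length_append, Walk.length_copy, Walk.length_copy,
      hw1len, hw2len, hw3'len, hDdist] at hbig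
    omega
  -- the coordinates
  set f : ℕ → V := fun j => (p.getVert j : V) with hf
  have hf0 : f 0 = x := by simp [hf, Walk.getVert_zero]
  have hfD : f D = y := by simp [hf, hD, Walk.getVert_length]
  have hfS : ∀ j, f j ∈ S := fun j => (p.getVert j).2
  set M : Finset ℕ :=
    (Finset.range (D+1)).filter (fun j => G.Adj u (f j) ∨ G.Adj v (f j)) with hM
  have h0M : 0 ∈ M := by
    rw [hM, Finset.mem_filter, Finset.mem_range, hf0]
    exact ⟨by omega, Or.inl hux⟩
  have hDM : D ∈ M := by
    rw [hM, Finset.mem_filter, Finset.mem_range, hfD]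
    exact ⟨by omega, Or.inr hvy⟩
  have hMD : ∀ j ∈ M, j ≤ D := by
    intro j hj
    rw [hM, Finset.mem_filter, Finset.mem_range] at hj
    omega
  -- cardinality bound for M
  have hinjf : Set.InjOn f (M : Set ℕ) := by
    intro a ha b hb hab
    have ha' : a ≤ D := hMD a (by simpa using ha)
    have hb' : b ≤ D := hMD b (by simpa using hb)
    exact path_getVert_inj p hp a b ha' hb' (Subtype.val_injective hab)
  have hsub : f '' (M : Set ℕ) ⊆ G.neighborSet u ∪ G.neighborSet v := by
    rintro z ⟨j, hj, rfl⟩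
    have hj' : j ∈ M := by simpa using hj
    rw [hM, Finset.mem_filter] at hj'
    rcases hj'.2 with h | h
    · exact Or.inl h
    · exact Or.inr h
  have hMcard : M.card ≤ Δ + Δ := by
    calc M.card = (M : Set ℕ).ncard := (Set.ncard_coe_finset M).symm
    _ = (f '' (M : Set ℕ)).ncard := (Set.ncard_image_of_injOn hinjf).symm
    _ ≤ (G.neighborSet u ∪ G.neighborSet v).ncard :=
        Set.ncard_le_ncard hsub (Set.toFinite _)
    _ ≤ (G.neighborSet u).ncard + (G.neighborSet v).ncard := Set.ncard_union_le _ _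
    _ ≤ Δ + Δ := Nat.add_le_add (hΔ u) (hΔ v)
  have hbig : (M.card - 1) * k < D := by
    have h1 : (M.card - 1) * k ≤ (2 * Δ) * k :=
      Nat.mul_le_mul_right k (by omega)
    have h2 : 2 * Δ * k < D := hDbig
    omega
  obtain ⟨a, haM, b, hbM, hab, hgapk, hnoc⟩ := exists_big_gap M k D h0M hDM hbig
  have haD : a ≤ D := hMD a haM
  have hbD : b ≤ D := hMD b hbM
  set n := b - a with hn
  set g : ℕ → V := fun j => f (a + j) with hg
  have hgb : g n = f b := by simp only [hg]; congr 1; omega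
  have hga : g 0 = f a := by simp only [hg, Nat.add_zero]
  -- adjacency along the segment
  have hgadj : ∀ j, j < n → G.Adj (g j) (g (j+1)) := by
    intro j hj
    have := p.adj_getVert_succ (i := a + j) (by omega)
    exact this
  have hginj : ∀ j l, j ≤ n → l ≤ n → g j = g l → j = l := by
    intro j l hj hl hjl
    have := path_getVert_inj p hp (a+j) (a+l) (by omega) (by omega)
      (Subtype.val_injective hjl)
    omega
  have hgS : ∀ j, g j ∈ S := fun j => hfS (a + j)
  have hgne_u : ∀ j, j ≤ n → g j ≠ u := by
    intro j _ h; exact huS (h ▸ hgS j)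
  have hgne_v : ∀ j, j ≤ n → g j ≠ v := by
    intro j _ h; exact hvS (h ▸ hgS j)
  -- the segment is induced
  have hind : ∀ j l, j ≤ n → l ≤ n → G.Adj (g j) (g l) → l = j + 1 ∨ j = l + 1 := by
    intro j l hj hl h
    have hjl : j ≠ l := by rintro rfl; exact h.ne rfl
    have hadjG' : (G.induce S).Adj (p.getVert (a+j)) (p.getVert (a+l)) := h
    rcases Nat.lt_or_ge j l with hlt | hge
    · have hdle : (G.induce S).dist (p.getVert (a+j)) (p.getVert (a+l)) ≤ 1 := by
        have := SimpleGraph.dist_le (Walk.cons hadjG' Walk.nil)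
        simpa using this
      have := key (a+j) (a+l) (by omega) (by omega) (by omega)
      omega
    · have hlt : l < j := by omega
      have hdle : (G.induce S).dist (p.getVert (a+l)) (p.getVert (a+j)) ≤ 1 := by
        have := SimpleGraph.dist_le (Walk.cons hadjG'.symm Walk.nil)
        simpa using this
      have := key (a+l) (a+j) (by omega) (by omega) (by omega)
      omega
  -- neighbors of u, v on the segment are only endpoints
  have hzg : ∀ j, j ≤ n → G.Adj u (g j) ∨ G.Adj v (g j) → j = 0 ∨ j = n := by
    intro j hj h
    have hmemM : a + j ∈ M := by
      rw [hM, Finset.mem_filter, Finset.mem_range]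
      exact ⟨by omega, h⟩
    by_contra hc
    push_neg at hc
    exact hnoc (a+j) hmemM ⟨by omega, by omega⟩
  have hk' : k < n := hgapk
  -- adjacency data at the endpoints
  have haM' := (Finset.mem_filter.mp (hM ▸ haM)).2
  have hbM' := (Finset.mem_filter.mp (hM ▸ hbM)).2
  rw [← hga] at haM'
  rw [← hgb] at hbM'
  rcases haM' with hua | hva <;> rcases hbM' with hub | hvb
  · exact apex1 hch u n g hgadj hginj hgne_u hua hub
      hind (fun j hj h => hzg j hj (Or.inl h)) hk'
  · by_cases hub : G.Adj u (g n)
    · exact apex1 hch u n g hgadj hginj hgne_u hua hub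
        hind (fun j hj h => hzg j hj (Or.inl h)) hk'
    · by_cases hva : G.Adj v (g 0)
      · exact apex1 hch v n g hgadj hginj hgne_v hva hvb
          hind (fun j hj h => hzg j hj (Or.inr h)) hk'
      · exact apex2 hch u v huv n g hgadj hginj hgne_u hgne_v hua hvb hub hva
          hind hzg hk'
  · by_cases hvb : G.Adj v (g n)
    · exact apex1 hch v n g hgadj hginj hgne_v hva hvb
        hind (fun j hj h => hzg j hj (Or.inr h)) hk'
    · by_cases hua : G.Adj u (g 0)
      · exact apex1 hch u n g hgadj hginj hgne_u hua hub
          hind (fun j hj h => hzg j hj (Or.inl h)) hk'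
      · exact apex2 hch v u huv.symm n g hgadj hginj hgne_v hgne_u hva hub hvb hua
          hind (fun j hj h => hzg j hj h.symm) hk'
  · exact apex1 hch v n g hgadj hginj hgne_v hva hvb
      hind (fun j hj h => hzg j hj (Or.inr h)) hk'
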